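/- With the same setup, the sequence a, b, c is an unconditioned d-sequence in R; that is, every permutation of a, b, c is a d-sequence. In particular, (a,b)R :_R c² = (a,b)R :_R c. -/

import Mathlib

open IsLocalRing

/-- `s = [a₁, ..., aₙ]` is a d-sequence if
`(a₁,...,a_{i-1}) : aᵢaⱼ = (a₁,...,a_{i-1}) : aⱼ` for all `i ≤ j`. -/
def IsDSequence {R : Type*} [CommRing R] (s : List R) : Prop :=
  ∀ i j : Fin s.length, (i : ℕ) ≤ (j : ℕ) →
    Submodule.colon (Ideal.ofList (s.take i)) (Ideal.span {s.get i * s.get j}) =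
      Submodule.colon (Ideal.ofList (s.take i)) (Ideal.span {s.get j})

section DSeqHelpers

open RingTheory.Sequence

variable {R : Type*} [CommRing R]

lemma ofList_pair' (A B : R) : Ideal.ofList [A, B] = Ideal.span {A, B} := by
  apply congrArg Ideal.span; ext r; simp

lemma third_reg' {A B V : R}
    (h : RingTheory.Sequence.IsWeaklyRegular R [A, B, V]) :
    ∀ s : R, s * V ∈ Ideal.span {A, B} → s ∈ Ideal.span {A, B} := by
  intro s hs
  have h2 := h.regular_mod_prev 2 (by norm_num)
  simp only [List.take, List.getElem_cons_succ, List.getElem_cons_zero] at h2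
  change IsSMulRegular (R ⧸ (Ideal.ofList [A, B] • ⊤ : Submodule R R)) V at h2
  rw [ofList_pair', Ideal.smul_eq_mul, Ideal.mul_top] at h2
  have key : V • (Submodule.Quotient.mk s : R ⧸ (Ideal.span {A, B} : Ideal R))
      = V • (0 : R ⧸ (Ideal.span {A, B} : Ideal R)) := by
    rw [smul_zero, ← Submodule.Quotient.mk_smul, Submodule.Quotient.mk_eq_zero]
    simpa [smul_eq_mul, mul_comm] using hs
  have := h2 key
  rwa [Submodule.Quotient.mk_eq_zero] at this

lemma second_reg' {A B V : R}
    (h : RingTheory.Sequence.IsWeaklyRegular R [A, B, V]) :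
    ∀ s : R, s * B ∈ Ideal.span {A} → s ∈ Ideal.span {A} := by
  intro s hs
  have h2 := h.regular_mod_prev 1 (by norm_num)
  simp only [List.take, List.getElem_cons_succ, List.getElem_cons_zero] at h2
  change IsSMulRegular (R ⧸ (Ideal.ofList [A] • ⊤ : Submodule R R)) B at h2
  rw [show Ideal.ofList [A] = Ideal.span {A} from Ideal.ofList_singleton A,
    Ideal.smul_eq_mul, Ideal.mul_top] at h2
  have key : B • (Submodule.Quotient.mk s : R ⧸ (Ideal.span {A} : Ideal R))
      = B • (0 : R ⧸ (Ideal.span {A} : Ideal R)) := by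
    rw [smul_zero, ← Submodule.Quotient.mk_smul, Submodule.Quotient.mk_eq_zero]
    simpa [smul_eq_mul, mul_comm] using hs
  have := h2 key
  rwa [Submodule.Quotient.mk_eq_zero] at this

lemma first_reg' {A B V : R}
    (h : RingTheory.Sequence.IsWeaklyRegular R [A, B, V]) :
    ∀ s : R, s * A = 0 → s = 0 := by
  intro s hs
  have h0 := ((isWeaklyRegular_cons_iff R A [B, V]).mp h).1
  apply h0
  show A • s = A • 0
  rw [smul_zero, smul_eq_mul, ← hs, mul_comm]

lemma rad_helper [IsLocalRing R] {u v w : R}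
    (hsop : (Ideal.span {u, v, w}).radical = maximalIdeal R) {I : Ideal R}
    (hle : I ≤ maximalIdeal R)
    (hu : u ∈ I.radical) (hv : v ∈ I.radical) (hw : w ∈ I.radical) :
    I.radical = maximalIdeal R := by
  apply le_antisymm
  · calc I.radical ≤ (maximalIdeal R).radical := Ideal.radical_mono hle
      _ = maximalIdeal R := ((IsLocalRing.maximalIdeal.isMaximal R).isPrime).radical
  · rw [← hsop, ← Ideal.radical_idem (I := I)]
    apply Ideal.radical_mono
    rw [Ideal.span_le]
    rintro t ht
    simp only [Set.mem_insert_iff, Set.mem_singleton_iff] at ht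
    rcases ht with rfl | rfl | rfl <;> assumption

lemma mem_rad_of_pow {I : Ideal R} {u : R} {n : ℕ} (h : u ^ n ∈ I.radical) :
    u ∈ I.radical := by
  rw [← Ideal.radical_idem (I := I)]
  exact ⟨n, h⟩

theorem core_lemma [IsLocalRing R]
    (hCM : ∀ u v w : R, (Ideal.span {u, v, w}).radical = maximalIdeal R →
      RingTheory.Sequence.IsRegular R [u, v, w])
    (u v w : R) (hsop : (Ideal.span {u, v, w}).radical = maximalIdeal R)
    (p q r p' q' r' : ℕ)
    (hp : 0 < p) (hq : 0 < q) (hr : 0 < r)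
    (hp' : 0 < p') (hq' : 0 < q') (hr' : 0 < r')
    (A B C : R)
    (hA : A = w ^ (r + r') - u ^ p' * v ^ q)
    (hB : B = u ^ (p + p') - v ^ q' * w ^ r)
    (hC : C = v ^ (q + q') - u ^ p * w ^ r') :
    (∀ s : R, s * A = 0 → s = 0) ∧
    (∀ s : R, s * B ∈ Ideal.span {A} → s ∈ Ideal.span {A}) ∧
    (∀ s : R, s * C ∈ Ideal.span {A} → s ∈ Ideal.span {A}) ∧
    Submodule.colon (Ideal.span {A, B}) (Ideal.span {C ^ 2}) =
      Submodule.colon (Ideal.span {A, B}) (Ideal.span {C}) := by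
  have hum : u ∈ maximalIdeal R := by
    rw [← hsop]; exact Ideal.le_radical (Ideal.subset_span (by simp))
  have hvm : v ∈ maximalIdeal R := by
    rw [← hsop]; exact Ideal.le_radical (Ideal.subset_span (by simp))
  have hwm : w ∈ maximalIdeal R := by
    rw [← hsop]; exact Ideal.le_radical (Ideal.subset_span (by simp))
  have hAm : A ∈ maximalIdeal R := by
    rw [hA]
    exact sub_mem (Ideal.pow_mem_of_mem _ hwm _ (by omega))
      (Ideal.mul_mem_right _ _ (Ideal.pow_mem_of_mem _ hum _ hp'))
  have hBm : B ∈ maximalIdeal R := by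
    rw [hB]
    exact sub_mem (Ideal.pow_mem_of_mem _ hum _ (by omega))
      (Ideal.mul_mem_right _ _ (Ideal.pow_mem_of_mem _ hvm _ hq'))
  have hCm : C ∈ maximalIdeal R := by
    rw [hC]
    exact sub_mem (Ideal.pow_mem_of_mem _ hvm _ (by omega))
      (Ideal.mul_mem_right _ _ (Ideal.pow_mem_of_mem _ hum _ hp))
  have hradABv : ∀ N : ℕ, 0 < N →
      (Ideal.span {A, B, v ^ N}).radical = maximalIdeal R := by
    intro N hN
    have hAI : A ∈ Ideal.span {A, B, v ^ N} := Ideal.subset_span (by simp)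
    have hBI : B ∈ Ideal.span {A, B, v ^ N} := Ideal.subset_span (by simp)
    have hvI : v ^ N ∈ Ideal.span {A, B, v ^ N} := Ideal.subset_span (by simp)
    have hvrad : v ∈ (Ideal.span {A, B, v ^ N}).radical :=
      mem_rad_of_pow (Ideal.le_radical hvI)
    have hwrad : w ∈ (Ideal.span {A, B, v ^ N}).radical := by
      apply mem_rad_of_pow (n := r + r')
      have : w ^ (r + r') = A + u ^ p' * v ^ q := by rw [hA]; ring
      rw [this]
      exact add_mem (Ideal.le_radical hAI)
        (Ideal.mul_mem_left _ _ (Ideal.pow_mem_of_mem _ hvrad _ hq))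
    have hurad : u ∈ (Ideal.span {A, B, v ^ N}).radical := by
      apply mem_rad_of_pow (n := p + p')
      have : u ^ (p + p') = B + v ^ q' * w ^ r := by rw [hB]; ring
      rw [this]
      exact add_mem (Ideal.le_radical hBI)
        (Ideal.mul_mem_right _ _ (Ideal.pow_mem_of_mem _ hvrad _ hq'))
    refine rad_helper hsop ?_ hurad hvrad hwrad
    rw [Ideal.span_le]
    rintro t ht
    simp only [Set.mem_insert_iff, Set.mem_singleton_iff] at ht
    rcases ht with rfl | rfl | rfl
    · exact hAm
    · exact hBm
    · exact Ideal.pow_mem_of_mem _ hvm _ hN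
  have hradACu : (Ideal.span {A, C, u}).radical = maximalIdeal R := by
    have hAI : A ∈ Ideal.span {A, C, u} := Ideal.subset_span (by simp)
    have hCI : C ∈ Ideal.span {A, C, u} := Ideal.subset_span (by simp)
    have huI : u ∈ Ideal.span {A, C, u} := Ideal.subset_span (by simp)
    have hurad : u ∈ (Ideal.span {A, C, u}).radical := Ideal.le_radical huI
    have hvrad : v ∈ (Ideal.span {A, C, u}).radical := by
      apply mem_rad_of_pow (n := q + q')
      have : v ^ (q + q') = C + u ^ p * w ^ r' := by rw [hC]; ring
      rw [this]
      exact add_mem (Ideal.le_radical hCI)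
        (Ideal.mul_mem_right _ _ (Ideal.pow_mem_of_mem _ hurad _ hp))
    have hwrad : w ∈ (Ideal.span {A, C, u}).radical := by
      apply mem_rad_of_pow (n := r + r')
      have : w ^ (r + r') = A + u ^ p' * v ^ q := by rw [hA]; ring
      rw [this]
      exact add_mem (Ideal.le_radical hAI)
        (Ideal.mul_mem_right _ _ (Ideal.pow_mem_of_mem _ hurad _ hp'))
    refine rad_helper hsop ?_ hurad hvrad hwrad
    rw [Ideal.span_le]
    rintro t ht
    simp only [Set.mem_insert_iff, Set.mem_singleton_iff] at ht
    rcases ht with rfl | rfl | rfl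
    · exact hAm
    · exact hCm
    · exact hum
  have hregABv : RingTheory.Sequence.IsWeaklyRegular R [A, B, v] := by
    have := (hCM A B (v ^ 1) (hradABv 1 one_pos)).toIsWeaklyRegular
    rwa [pow_one] at this
  have hregABvN : RingTheory.Sequence.IsWeaklyRegular R [A, B, v ^ ((q + q') * p')] :=
    (hCM A B _ (hradABv _ (by positivity))).toIsWeaklyRegular
  have hregACu : RingTheory.Sequence.IsWeaklyRegular R [A, C, u] :=
    (hCM A C u hradACu).toIsWeaklyRegular
  refine ⟨first_reg' hregABv, second_reg' hregABv, second_reg' hregACu, ?_⟩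
  apply le_antisymm
  · intro s hs
    rw [Ideal.mem_colon_span_singleton] at hs ⊢
    set J : Ideal R := Ideal.span {A, B} with hJ
    have hAJ : A ∈ J := Ideal.subset_span (by simp)
    have hBJ : B ∈ J := Ideal.subset_span (by simp)
    have h2 : u ^ p' * (s * C) ∈ J := by
      have hid : u ^ p' * (s * C) = (-(s * v ^ q')) * A + (-(s * w ^ r')) * B := by
        rw [hA, hB, hC]; ring
      rw [hid]
      exact add_mem (Ideal.mul_mem_left _ _ hAJ) (Ideal.mul_mem_left _ _ hBJ)
    have claim : ∀ n : ℕ, (v ^ (q + q')) ^ n * (s * C)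
        - (u ^ p) ^ n * (w ^ r') ^ n * (s * C) ∈ J := by
      intro n
      induction n with
      | zero => simp
      | succ n ih =>
        have hid : (v ^ (q + q')) ^ (n + 1) * (s * C)
            - (u ^ p) ^ (n + 1) * (w ^ r') ^ (n + 1) * (s * C)
            = v ^ (q + q') * ((v ^ (q + q')) ^ n * (s * C)
                - (u ^ p) ^ n * (w ^ r') ^ n * (s * C))
              + ((u ^ p) ^ n * (w ^ r') ^ n) * (s * C ^ 2) := by
          rw [hC]; ring
        rw [hid]
        exact add_mem (Ideal.mul_mem_left _ _ ih) (Ideal.mul_mem_left _ _ hs)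
    obtain ⟨k, rfl⟩ : ∃ k, p = k + 1 := ⟨p - 1, by omega⟩
    have hpow : (v ^ (q + q')) ^ p' * (s * C) ∈ J := by
      have h3 : (u ^ (k + 1)) ^ p' * (w ^ r') ^ p' * (s * C)
          = (u ^ (k * p') * w ^ (r' * p')) * (u ^ p' * (s * C)) := by
        rw [← pow_mul, ← pow_mul, show (k + 1) * p' = k * p' + p' by ring, pow_add]
        ring
      have h4 : (u ^ (k + 1)) ^ p' * (w ^ r') ^ p' * (s * C) ∈ J := by
        rw [h3]; exact Ideal.mul_mem_left _ _ h2
      have h5 := add_mem (claim p') h4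
      simpa using h5
    exact third_reg' hregABvN (s * C) (by rw [mul_comm, pow_mul]; exact hpow)
  · intro s hs
    rw [Ideal.mem_colon_span_singleton] at hs ⊢
    rw [show s * C ^ 2 = (s * C) * C by ring]
    exact Ideal.mul_mem_right _ _ hs

lemma perm2_enum {α : Type*} {v w b c : α} (h : List.Perm [v, w] [b, c]) :
    (v = b ∧ w = c) ∨ (v = c ∧ w = b) := by
  have hv : v ∈ [b, c] := h.subset (by simp)
  simp only [List.mem_cons, List.not_mem_nil, or_false, List.mem_singleton] at hv
  rcases hv with h' | h'
  · subst v
    left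
    have h2 := h.cons_inv
    rw [List.perm_singleton] at h2
    simp only [List.cons.injEq, and_true] at h2
    exact ⟨rfl, h2⟩
  · subst v
    right
    have h2 := (h.trans (List.Perm.swap _ _ _)).cons_inv
    rw [List.perm_singleton] at h2
    simp only [List.cons.injEq, and_true] at h2
    exact ⟨rfl, h2⟩

lemma perm3_enum {α : Type*} {t : List α} {a b c : α} (h : List.Perm t [a, b, c]) :
    t = [a, b, c] ∨ t = [a, c, b] ∨ t = [b, a, c] ∨ t = [b, c, a] ∨
      t = [c, a, b] ∨ t = [c, b, a] := by
  have hl : t.length = 3 := h.length_eq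
  obtain ⟨u, v, w, rfl⟩ : ∃ u v w, t = [u, v, w] := by
    match t, hl with
    | [u, v, w], _ => exact ⟨u, v, w, rfl⟩
  have hu : u ∈ [a, b, c] := h.subset (by simp)
  simp only [List.mem_cons, List.not_mem_nil, or_false, List.mem_singleton] at hu
  rcases hu with h' | h' | h'
  · subst u
    rcases perm2_enum h.cons_inv with ⟨rfl, rfl⟩ | ⟨rfl, rfl⟩
    · exact Or.inl rfl
    · exact Or.inr (Or.inl rfl)
  · subst u
    have h' := (h.trans (List.Perm.swap _ _ _)).cons_inv
    rcases perm2_enum h' with ⟨rfl, rfl⟩ | ⟨rfl, rfl⟩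
    · exact Or.inr (Or.inr (Or.inl rfl))
    · exact Or.inr (Or.inr (Or.inr (Or.inl rfl)))
  · subst u
    have hmove : List.Perm [a, b, c] [c, a, b] :=
      List.perm_append_comm (l₁ := [a, b]) (l₂ := [c])
    have h' := (h.trans hmove).cons_inv
    rcases perm2_enum h' with ⟨rfl, rfl⟩ | ⟨rfl, rfl⟩
    · exact Or.inr (Or.inr (Or.inr (Or.inr (Or.inl rfl))))
    · exact Or.inr (Or.inr (Or.inr (Or.inr (Or.inr rfl))))

lemma colon_mul_left' {I : Ideal R} {u x : R}
    (hu : ∀ s : R, s * u ∈ I → s ∈ I) :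
    Submodule.colon I (Ideal.span {u * x}) = Submodule.colon I (Ideal.span {x}) := by
  ext s
  simp only [Ideal.mem_colon_span_singleton]
  constructor
  · intro hs
    apply hu
    rwa [show s * x * u = s * (u * x) by ring]
  · intro hs
    rw [show s * (u * x) = u * (s * x) by ring]
    exact Ideal.mul_mem_left _ _ hs

lemma dseq_of {p q r : R}
    (h1 : ∀ s : R, s * p = 0 → s = 0)
    (h12 : ∀ s : R, s * q ∈ Ideal.span {p} → s ∈ Ideal.span {p})
    (hkey : Submodule.colon (Ideal.span {p, q}) (Ideal.span {r ^ 2}) =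
      Submodule.colon (Ideal.span {p, q}) (Ideal.span {r})) :
    IsDSequence [p, q, r] := by
  have opair : Ideal.ofList [p, q] = Ideal.span {p, q} := by
    apply congrArg Ideal.span; ext t; simp
  have h1' : ∀ s : R, s * p ∈ (⊥ : Ideal R) → s ∈ (⊥ : Ideal R) := by
    intro s hs
    rw [Ideal.mem_bot] at hs ⊢
    exact h1 s hs
  intro i j hij
  obtain ⟨iv, hi⟩ := i
  obtain ⟨jv, hj⟩ := j
  simp only [List.length] at hi hj
  simp only [Fin.val_mk] at hij
  interval_cases iv <;> interval_cases jv <;>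
    simp only [List.take, List.get, Fin.val_mk, Ideal.ofList_nil,
      Ideal.ofList_singleton, opair]
  all_goals try omega
  all_goals try exact colon_mul_left' h1'
  all_goals try exact colon_mul_left' h12
  all_goals rw [show r * r = r ^ 2 by ring]; exact hkey

end DSeqHelpers

/-- The maximal minors `a, b, c` of `((x^α, y^β, z^γ), (y^β', z^γ', x^α'))`
form an unconditioned d-sequence: every permutation of `a, b, c` is a
d-sequence.  In particular `(a,b) : c² = (a,b) : c`. -/
theorem minors_unconditioned_dSequence
    {R : Type*} [CommRing R] [IsNoetherianRing R] [IsLocalRing R]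
    (hdim : ringKrullDim R = 3)
    (hCM : ∀ u v w : R, (Ideal.span {u, v, w}).radical = maximalIdeal R →
      RingTheory.Sequence.IsRegular R [u, v, w])
    (x y z : R) (hsop : (Ideal.span {x, y, z}).radical = maximalIdeal R)
    (α β γ α' β' γ' : ℕ)
    (hα : 0 < α) (hβ : 0 < β) (hγ : 0 < γ)
    (hα' : 0 < α') (hβ' : 0 < β') (hγ' : 0 < γ')
    (a b c : R)
    (ha : a = z ^ (γ + γ') - x ^ α' * y ^ β)
    (hb : b = x ^ (α + α') - y ^ β' * z ^ γ)
    (hc : c = y ^ (β + β') - x ^ α * z ^ γ') :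
    (∀ t : List R, t.Perm [a, b, c] → IsDSequence t) ∧
      Submodule.colon (Ideal.span {a, b}) (Ideal.span {c ^ 2}) =
        Submodule.colon (Ideal.span {a, b}) (Ideal.span {c}) := by
  have hsop1 : (Ideal.span {y, z, x}).radical = maximalIdeal R := by
    rw [show ({y, z, x} : Set R) = {x, y, z} by ext t; constructor <;>
      (intro h; simp only [Set.mem_insert_iff, Set.mem_singleton_iff] at h ⊢; tauto)]
    exact hsop
  have hsop2 : (Ideal.span {z, x, y}).radical = maximalIdeal R := by
    rw [show ({z, x, y} : Set R) = {x, y, z} by ext t; constructor <;>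
      (intro h; simp only [Set.mem_insert_iff, Set.mem_singleton_iff] at h ⊢; tauto)]
    exact hsop
  obtain ⟨aNZ, bModA, cModA, keyABc⟩ :=
    core_lemma hCM x y z hsop α β γ α' β' γ' hα hβ hγ hα' hβ' hγ' a b c ha hb hc
  obtain ⟨bNZ, cModB, aModB, keyBCa⟩ :=
    core_lemma hCM y z x hsop1 β γ α β' γ' α' hβ hγ hα hβ' hγ' hα' b c a
      hb (by rw [hc]; ring) (by rw [ha]; ring)
  obtain ⟨cNZ, aModC, bModC, keyCAb⟩ :=
    core_lemma hCM z x y hsop2 γ α β γ' α' β' hγ hα hβ hγ' hα' hβ' c a b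
      (by rw [hc]; ring) ha (by rw [hb]; ring)
  have keyACb : Submodule.colon (Ideal.span {a, c}) (Ideal.span {b ^ 2}) =
      Submodule.colon (Ideal.span {a, c}) (Ideal.span {b}) := by
    rw [Set.pair_comm a c]; exact keyCAb
  have keyBAc : Submodule.colon (Ideal.span {b, a}) (Ideal.span {c ^ 2}) =
      Submodule.colon (Ideal.span {b, a}) (Ideal.span {c}) := by
    rw [Set.pair_comm b a]; exact keyABc
  have keyCBa : Submodule.colon (Ideal.span {c, b}) (Ideal.span {a ^ 2}) =
      Submodule.colon (Ideal.span {c, b}) (Ideal.span {a}) := by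
    rw [Set.pair_comm c b]; exact keyBCa
  refine ⟨?_, keyABc⟩
  intro t ht
  rcases perm3_enum ht with rfl | rfl | rfl | rfl | rfl | rfl
  · exact dseq_of aNZ bModA keyABc
  · exact dseq_of aNZ cModA keyACb
  · exact dseq_of bNZ aModB keyBAc
  · exact dseq_of bNZ cModB keyBCa
  · exact dseq_of cNZ aModC keyCAb
  · exact dseq_of cNZ bModC keyCBa
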